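/- For all natural numbers m, t, n with m ≤ t ≤ n, the following identity of integers holds: ∑_{r=0}^{m} (−1)^r · C(m, r) · C(n − m + r, n − t) = (−1)^m · C(n − m, t), where C(·,·) denotes the ordinary binomial coefficient (with C(a, b) = 0 whenever b > a). -/

import Mathlib

open Finset

lemma key (m N k : ℕ) :
    ∑ r ∈ Finset.range (m + 1),
        (-1 : ℤ) ^ r * (m.choose r : ℤ) * ((N + r).choose k : ℤ) =
      (-1 : ℤ) ^ m * (if m ≤ k then ((N.choose (k - m) : ℤ)) else 0) := by
  induction m generalizing N with
  | zero => simp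
  | succ m ih =>
    have split : ∑ r ∈ Finset.range (m + 2),
        (-1 : ℤ) ^ r * ((m+1).choose r : ℤ) * ((N + r).choose k : ℤ)
        = (∑ r ∈ Finset.range (m + 1),
            (-1 : ℤ) ^ r * (m.choose r : ℤ) * ((N + r).choose k : ℤ))
          - (∑ r ∈ Finset.range (m + 1),
            (-1 : ℤ) ^ r * (m.choose r : ℤ) * (((N+1) + r).choose k : ℤ)) := by
      rw [Finset.sum_range_succ' _ (m+1)]
      have h1 : ∀ r, ((m+1).choose (r+1) : ℤ) = (m.choose r : ℤ) + (m.choose (r+1) : ℤ) := by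
        intro r; exact_mod_cast congrArg (Nat.cast : ℕ → ℤ) (Nat.choose_succ_succ m r)
      have : ∑ r ∈ Finset.range (m + 1),
          (-1 : ℤ) ^ (r+1) * ((m+1).choose (r+1) : ℤ) * ((N + (r+1)).choose k : ℤ)
          = (∑ r ∈ Finset.range (m + 1),
              (-(-1 : ℤ) ^ r) * (m.choose r : ℤ) * (((N+1) + r).choose k : ℤ))
            + ∑ r ∈ Finset.range (m + 1),
              (-1 : ℤ) ^ (r+1) * (m.choose (r+1) : ℤ) * ((N + (r+1)).choose k : ℤ) := by
        rw [← Finset.sum_add_distrib]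
        apply Finset.sum_congr rfl
        intro r _
        rw [h1]
        have : N + (r + 1) = (N + 1) + r := by ring
        rw [this]
        ring
      rw [this]
      have h2 : (∑ r ∈ Finset.range (m + 1),
          (-1 : ℤ) ^ (r+1) * (m.choose (r+1) : ℤ) * ((N + (r+1)).choose k : ℤ))
          + (-1:ℤ)^0 * ((m+1).choose 0 : ℤ) * ((N+0).choose k : ℤ)
          = ∑ r ∈ Finset.range (m + 1),
            (-1 : ℤ) ^ r * (m.choose r : ℤ) * ((N + r).choose k : ℤ) := by
        rw [Finset.sum_range_succ' (fun r => (-1 : ℤ) ^ r * (m.choose r : ℤ) * ((N + r).choose k : ℤ)) m]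
        congr 1
        · rw [Finset.sum_range_succ]
          simp [Nat.choose_succ_self]
        · simp
      rw [add_assoc, h2]
      have : ∀ r, (-(-1 : ℤ) ^ r) * (m.choose r : ℤ) * (((N+1) + r).choose k : ℤ)
          = -((-1 : ℤ) ^ r * (m.choose r : ℤ) * (((N+1) + r).choose k : ℤ)) := by
        intro r; ring
      simp_rw [this, Finset.sum_neg_distrib]
      ring
    rw [split, ih N, ih (N+1)]
    split_ifs with h1 h2 h2
    · have hlt : m < k := by omega
      have hp : ((N+1).choose (k - m) : ℤ) = (N.choose (k - m - 1) : ℤ) + (N.choose (k-m) : ℤ) := by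
        have : k - m = (k - m - 1) + 1 := by omega
        rw [this, Nat.choose_succ_succ]
        push_cast; ring
      have hkm : k - (m+1) = k - m - 1 := by omega
      rw [hkm, hp]
      ring
    · have : k = m := by omega
      subst this
      simp only [Nat.sub_self, Nat.choose_zero_right]
      push_cast; ring
    · omega
    · ring

/-- Alternating-sum binomial identity (Lemma 4.3(1)): for `m ≤ t ≤ n`,
`∑_{r=0}^{m} (−1)^r C(m,r) C(n−m+r, n−t) = (−1)^m C(n−m, t)`. -/
theorem stmt7 (m t n : ℕ) (hmt : m ≤ t) (htn : t ≤ n) :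
    ∑ r ∈ Finset.range (m + 1),
        (-1 : ℤ) ^ r * (m.choose r : ℤ) * ((n - m + r).choose (n - t) : ℤ) =
      (-1 : ℤ) ^ m * ((n - m).choose t : ℤ) := by
  rw [key m (n - m) (n - t)]
  by_cases h : m ≤ n - t
  · rw [if_pos h]
    have ht : t ≤ n - m := by omega
    have : n - t - m = (n - m) - t := by omega
    rw [this, Nat.choose_symm ht]
  · rw [if_neg h]
    have : n - m < t := by omega
    rw [Nat.choose_eq_zero_of_lt this]
    simp
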